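/- Let S be a smooth projective surface and D a big and nef divisor with Null(D) = {E₁,…,E_ℓ}. Let C be an irreducible curve with C ∉ Null(D), Y• = {S ⊃ C ⊃ {p}} an admissible flag, D_t = D − tC with Zariski decomposition P_t + N_t for 0 < t < μ. If at t = t₀ ∈ (0, μ) the support of N_t acquires new irreducible components (i.e., supp(N_{t₀}) ⊊ supp(N_{t₀+ε}) for all small ε > 0), then at least one of the newly acquired components does not belong to Null(D). -/
import Mathlib


/-- `n` is the negative part of the Zariski decomposition of the class `X`:
`n` is effective, supported on the curve classes `cl`, the difference
`X − Σ nⱼ·clⱼ` is nef, orthogonal to every curve in the support of `n`, and `n`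
is minimal among effective divisors with nef difference. -/
def ZarNeg {V ι : Type*} [AddCommGroup V] [Module ℝ V]
    (q : LinearMap.BilinForm ℝ V) (cl : ι → V) (X : V) (n : ι →₀ ℝ) : Prop :=
  (∀ i, 0 ≤ n i) ∧
  (∀ i, 0 ≤ q (X - n.sum fun j a => a • cl j) (cl i)) ∧
  (∀ i ∈ n.support, q (X - n.sum fun j a => a • cl j) (cl i) = 0) ∧
  (∀ g : ι →₀ ℝ, (∀ i, 0 ≤ g i) →
    (∀ i, 0 ≤ q (X - g.sum fun j a => a • cl j) (cl i)) → ∀ i, n i ≤ g i)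

/-- (Lemma 3.1.) `D` big and nef, `C = cl c₀ ∉ Null(D)` the
divisorial part of an admissible flag, `N t` the negative part of the Zariski
decomposition of `D − t·C`. If at `t₀ ∈ (0, μ)` the support of the negative part
acquires new components (it is stable equal to `supp N(t₀+ε₀)` for `0 < ε ≤ ε₀` and
strictly contains `supp N(t₀)`), then some newly acquired component `i` satisfies
`q D (cl i) ≠ 0`, i.e. does not belong to `Null(D)`. -/
theorem acquired_component_not_in_null
    (V ι : Type*) [AddCommGroup V] [Module ℝ V]
    (q : LinearMap.BilinForm ℝ V) (hsymm : ∀ x y, q x y = q y x)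
    (cl : ι → V) (hclinj : Function.Injective cl)
    (hcross : ∀ i j : ι, i ≠ j → 0 ≤ q (cl i) (cl j))
    (D : V) (hDnef : ∀ i, 0 ≤ q D (cl i)) (hDbig : 0 < q D D)
    (c₀ : ι) (hc₀ : q D (cl c₀) ≠ 0)
    (μ : ℝ) (hμ : 0 < μ)
    (N : ℝ → ι →₀ ℝ)
    (hZar : ∀ t ∈ Set.Icc (0 : ℝ) μ, ZarNeg q cl (D - t • cl c₀) (N t))
    (t₀ : ℝ) (ht₀ : t₀ ∈ Set.Ioo 0 μ)
    (ε₀ : ℝ) (hε₀ : 0 < ε₀) (hε₀μ : t₀ + ε₀ < μ)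
    (hstable : ∀ ε ∈ Set.Ioc (0 : ℝ) ε₀, (N (t₀ + ε)).support = (N (t₀ + ε₀)).support)
    (hgrow : (N t₀).support ⊂ (N (t₀ + ε₀)).support) :
    ∃ i ∈ (N (t₀ + ε₀)).support, i ∉ (N t₀).support ∧ q D (cl i) ≠ 0 := by
  classical
  by_contra hcon
  push_neg at hcon
  -- hcon : ∀ i ∈ (N (t₀+ε₀)).support, i ∉ (N t₀).support → q D (cl i) = 0
  obtain ⟨hm0, hmnef, hmorth, hmmin⟩ := hZar t₀ ⟨ht₀.1.le, ht₀.2.le⟩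
  obtain ⟨hn0, hnnef, hnorth, hnmin⟩ :=
    hZar (t₀ + ε₀) ⟨by linarith [ht₀.1], hε₀μ.le⟩
  set m := N t₀ with hm
  set n := N (t₀ + ε₀) with hn
  have hsub : m.support ⊆ n.support := hgrow.subset
  have expand : ∀ (t : ℝ) (f : ι →₀ ℝ) (i : ι),
      q (D - t • cl c₀ - f.sum fun j a => a • cl j) (cl i)
        = q D (cl i) - t * q (cl c₀) (cl i)
          - ∑ j ∈ f.support, f j * q (cl j) (cl i) := by
    intro t f i
    rw [Finsupp.sum]
    simp [map_sub, map_sum, map_smul, sub_sub]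
  -- Step B: new components are orthogonal to c₀ and to all old components
  have key : ∀ i ∈ n.support, i ∉ m.support →
      q (cl c₀) (cl i) = 0 ∧ ∀ j ∈ m.support, q (cl j) (cl i) = 0 := by
    intro i hi hni
    have hD0 : q D (cl i) = 0 := hcon i hi hni
    have hic : c₀ ≠ i := by rintro rfl; exact hc₀ hD0
    have hqc : 0 ≤ q (cl c₀) (cl i) := hcross c₀ i hic
    have hQ := hmnef i
    rw [expand] at hQ
    have hsumnn : ∀ j ∈ m.support, 0 ≤ m j * q (cl j) (cl i) := by
      intro j hj
      exact mul_nonneg (hm0 j) (hcross j i (by rintro rfl; exact hni hj))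
    have hsum0 : 0 ≤ ∑ j ∈ m.support, m j * q (cl j) (cl i) :=
      Finset.sum_nonneg hsumnn
    have htc : 0 ≤ t₀ * q (cl c₀) (cl i) := mul_nonneg ht₀.1.le hqc
    have h1 : t₀ * q (cl c₀) (cl i) = 0 := by rw [hD0] at hQ; linarith
    have h2 : ∑ j ∈ m.support, m j * q (cl j) (cl i) = 0 := by
      rw [hD0] at hQ; linarith
    constructor
    · rcases mul_eq_zero.mp h1 with h | h
      · exact absurd h (ne_of_gt ht₀.1)
      · exact h
    · intro j hj
      have := (Finset.sum_eq_zero_iff_of_nonneg hsumnn).mp h2 j hj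
      rcases mul_eq_zero.mp this with h | h
      · exact absurd h (Finsupp.mem_support_iff.mp hj)
      · exact h
  have hsplit : ∀ (f : ι → ℝ),
      ∑ j ∈ n.support, f j
        = ∑ j ∈ m.support, f j + ∑ j ∈ n.support \ m.support, f j := by
    intro f
    rw [← Finset.sum_sdiff hsub, add_comm]
  -- Step C: for new i, the new part of n is orthogonal to cl i
  have keyC : ∀ i ∈ n.support, i ∉ m.support →
      ∑ j ∈ n.support \ m.support, n j * q (cl j) (cl i) = 0 := by
    intro i hi hni
    have horth := hnorth i hi
    rw [expand] at horth
    have hD0 : q D (cl i) = 0 := hcon i hi hni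
    have hc0 : q (cl c₀) (cl i) = 0 := (key i hi hni).1
    have hold : ∑ j ∈ m.support, n j * q (cl j) (cl i) = 0 :=
      Finset.sum_eq_zero fun j hj => by rw [(key i hi hni).2 j hj, mul_zero]
    have := hsplit (fun j => n j * q (cl j) (cl i))
    rw [hD0, hc0] at horth
    simp only [this, hold, zero_add] at horth
    linarith
  -- Step D: the restriction of n to the old support contradicts minimality
  set g : ι →₀ ℝ := n.filter (· ∈ m.support) with hgdef
  have hgsupp : g.support = m.support := by
    ext j
    simp only [hgdef, Finsupp.support_filter, Finset.mem_filter]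
    exact ⟨fun h => h.2, fun h => ⟨hsub h, h⟩⟩
  have hgval : ∀ j ∈ m.support, g j = n j := by
    intro j hj
    rw [hgdef]; exact Finsupp.filter_apply_pos _ _ hj
  have hg0 : ∀ i, 0 ≤ g i := by
    intro i
    by_cases h : i ∈ m.support
    · rw [hgval i h]; exact hn0 i
    · have : g i = 0 := by rw [hgdef]; exact Finsupp.filter_apply_neg _ _ h
      rw [this]
  have hgsum : ∀ i, ∑ j ∈ g.support, g j * q (cl j) (cl i)
      = ∑ j ∈ m.support, n j * q (cl j) (cl i) := by
    intro i
    rw [hgsupp]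
    exact Finset.sum_congr rfl fun j hj => by rw [hgval j hj]
  have hgnef : ∀ i, 0 ≤ q (D - (t₀ + ε₀) • cl c₀ - g.sum fun j a => a • cl j) (cl i) := by
    intro i
    rw [expand, hgsum]
    have hA : q (D - (t₀ + ε₀) • cl c₀ - n.sum fun j a => a • cl j) (cl i)
        = q D (cl i) - (t₀ + ε₀) * q (cl c₀) (cl i)
          - ∑ j ∈ n.support, n j * q (cl j) (cl i) := expand _ _ _
    have hsp := hsplit (fun j => n j * q (cl j) (cl i))
    by_cases hinew : i ∈ n.support ∧ i ∉ m.support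
    · have h0 := hnorth i hinew.1
      rw [hA] at h0
      have h1 := keyC i hinew.1 hinew.2
      rw [hsp] at h0
      linarith
    · have hnefn := hnnef i
      rw [hA] at hnefn
      have hnew : 0 ≤ ∑ j ∈ n.support \ m.support, n j * q (cl j) (cl i) := by
        refine Finset.sum_nonneg fun j hj => ?_
        rw [Finset.mem_sdiff] at hj
        refine mul_nonneg (hn0 j) (hcross j i ?_)
        rintro rfl
        exact hinew ⟨hj.1, hj.2⟩
      rw [hsp] at hnefn
      linarith
  obtain ⟨i₀, hi₀n, hi₀m⟩ := Finset.exists_of_ssubset hgrow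
  have hmin := hnmin g hg0 hgnef i₀
  have hg0' : g i₀ = 0 := by rw [hgdef]; exact Finsupp.filter_apply_neg _ _ hi₀m
  have : 0 < n i₀ := lt_of_le_of_ne (hn0 i₀) (Ne.symm (Finsupp.mem_support_iff.mp hi₀n))
  rw [hg0'] at hmin
  linarith
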